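/- Let σ : ℝ → ℝ be C¹ with M₁ ≤ σ′(x) ≤ M₂ for all x ∈ ℝ, where 0 < M₁ ≤ M₂, σ(0) = 0 and x·σ(x) ≥ 0 for all x. Let c ∈ ℕ and let W = W₁ × ⋯ × W_c, where each W_i is a finite-dimensional subspace of L²(ℝ) ∩ L^∞(ℝ). Then the Nemytskii operator σ : W → (L²(ℝ))^c given componentwise by σ(f)_i(x) = σ(f_i(x)) is Fréchet differentiable at every g ∈ W, its Fréchet derivative is the bounded linear map σ′(g) : W → (L²(ℝ))^c, (σ′(g)[f])_i(x) = σ′(g_i(x)) f_i(x), which satisfies ‖σ′(g)[f]‖₂ ≤ M₂‖f‖₂, and the map g ↦ σ′(g) is continuous from W to the space of bounded linear operators W → (L²(ℝ))^c; in particular σ ∈ C¹(W). -/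

import Mathlib

set_option synthInstance.maxHeartbeats 4000000
set_option maxHeartbeats 4000000

/-!
Statement 6: the Nemytskii operator associated with a C¹ nonlinearity σ with
0 < M₁ ≤ σ′ ≤ M₂, σ(0) = 0 and x·σ(x) ≥ 0 is continuously Fréchet differentiable on a
finite product W = W₁ × ⋯ × W_c of finite-dimensional subspaces of L²(ℝ) ∩ L^∞(ℝ), with
derivative f ↦ (σ′∘g_i)·f_i at g, satisfying ‖σ′(g)[f]‖₂ ≤ M₂‖f‖₂.
-/

open MeasureTheory Real
open scoped Classical

/-- The Hilbert space `L²(ℝ)`. -/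
noncomputable abbrev H : Type := MeasureTheory.Lp ℝ 2 (volume : Measure ℝ)

/-- The class in `L²(ℝ)` of a function (zero if the function is not square integrable). -/
noncomputable def toLp2 (f : ℝ → ℝ) : H :=
  if h : MemLp f 2 volume then h.toLp f else 0

open scoped ENNReal NNReal

namespace NemAux

lemma toLp2_of_mem {f : ℝ → ℝ} (hf : MemLp f 2 volume) : toLp2 f = hf.toLp f := dif_pos hf

lemma toLp2_congr {f g : ℝ → ℝ} (hf : MemLp f 2 volume) (h : f =ᵐ[volume] g) :
    toLp2 f = toLp2 g := by
  have hg : MemLp g 2 volume := (memLp_congr_ae h).mp hf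
  rw [toLp2_of_mem hf, toLp2_of_mem hg]
  exact MemLp.toLp_congr hf hg h

lemma toLp2_sub {f g : ℝ → ℝ} (hf : MemLp f 2 volume) (hg : MemLp g 2 volume) :
    toLp2 (fun x => f x - g x) = toLp2 f - toLp2 g := by
  have e : (fun x => f x - g x) = f - g := rfl
  rw [e, toLp2_of_mem hf, toLp2_of_mem hg, toLp2_of_mem (hf.sub hg)]
  exact MemLp.toLp_sub hf hg

lemma toLp2_add {f g : ℝ → ℝ} (hf : MemLp f 2 volume) (hg : MemLp g 2 volume) :
    toLp2 (fun x => f x + g x) = toLp2 f + toLp2 g := by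
  have e : (fun x => f x + g x) = f + g := rfl
  rw [e, toLp2_of_mem hf, toLp2_of_mem hg, toLp2_of_mem (hf.add hg)]
  exact MemLp.toLp_add hf hg

lemma toLp2_smul {f : ℝ → ℝ} (hf : MemLp f 2 volume) (a : ℝ) :
    toLp2 (fun x => a * f x) = a • toLp2 f := by
  have e : (fun x => a * f x) = a • f := rfl
  rw [e, toLp2_of_mem hf, toLp2_of_mem (hf.const_smul a)]
  exact MemLp.toLp_const_smul a hf

lemma norm_toLp2_le {f : ℝ → ℝ} {C : ℝ} (hC : 0 ≤ C) (hf : MemLp f 2 volume) (u : H)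
    (h : ∀ᵐ x ∂(volume : Measure ℝ), |f x| ≤ C * |u x|) : ‖toLp2 f‖ ≤ C * ‖u‖ := by
  rw [toLp2_of_mem hf, Lp.norm_toLp]
  have h' : ∀ᵐ x ∂(volume : Measure ℝ), ‖f x‖ ≤ (C.toNNReal : ℝ) * ‖u x‖ := by
    filter_upwards [h] with x hx
    simpa [Real.norm_eq_abs, Real.coe_toNNReal C hC] using hx
  have := eLpNorm_le_nnreal_smul_eLpNorm_of_ae_le_mul (μ := volume) h' 2
  have hu : eLpNorm (⇑u) 2 volume < ⊤ := Lp.eLpNorm_lt_top u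
  calc (eLpNorm f 2 volume).toReal ≤ ((C.toNNReal : ℝ≥0∞) * eLpNorm (⇑u) 2 volume).toReal := by
        apply ENNReal.toReal_mono
        · exact ENNReal.mul_ne_top ENNReal.coe_ne_top hu.ne
        · simpa [ENNReal.smul_def] using this
    _ = C * ‖u‖ := by
        rw [ENNReal.toReal_mul, Lp.norm_def]
        simp [Real.coe_toNNReal C hC]


lemma memLp_mul {φ : ℝ → ℝ} (hφm : AEStronglyMeasurable φ volume) {M : ℝ}
    (hM : ∀ x, |φ x| ≤ M) (u : H) : MemLp (fun x => φ x * u x) 2 volume := by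
  apply MemLp.of_le_mul (Lp.memLp u) (hφm.mul (Lp.aestronglyMeasurable u))
  filter_upwards with x
  simp only [Pi.mul_apply, Real.norm_eq_abs, abs_mul]
  exact mul_le_mul_of_nonneg_right (hM x) (abs_nonneg _)

/-- Multiplication by a bounded a.e.-measurable function, as a CLM on `H`. -/
noncomputable def mulCLM (φ : ℝ → ℝ) (hφm : AEStronglyMeasurable φ volume) (M : ℝ)
    (hM : ∀ x, |φ x| ≤ M) : H →L[ℝ] H := by
  have hM0 : 0 ≤ M := le_trans (abs_nonneg _) (hM 0)
  refine LinearMap.mkContinuous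
    { toFun := fun u => toLp2 (fun x => φ x * u x)
      map_add' := fun u v => ?_
      map_smul' := fun a u => ?_ } M (fun u => ?_)
  · 
    have h1 : toLp2 (fun x => φ x * (↑(u + v) : ℝ → ℝ) x)
        = toLp2 (fun x => φ x * u x + φ x * v x) := by
      apply toLp2_congr (memLp_mul hφm hM (u + v))
      filter_upwards [Lp.coeFn_add u v] with x hx
      rw [hx]; simp [mul_add]
    rw [h1, toLp2_add (memLp_mul hφm hM u) (memLp_mul hφm hM v)]
  · dsimp only [RingHom.id_apply]
    have h1 : toLp2 (fun x => φ x * (↑(a • u) : ℝ → ℝ) x)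
        = toLp2 (fun x => a * (φ x * u x)) := by
      apply toLp2_congr (memLp_mul hφm hM (a • u))
      filter_upwards [Lp.coeFn_smul a u] with x hx
      rw [hx]; simp; ring
    rw [h1, toLp2_smul (memLp_mul hφm hM u) a]
  · refine norm_toLp2_le hM0 (memLp_mul hφm hM u) u ?_
    filter_upwards with x
    rw [abs_mul]
    exact mul_le_mul_of_nonneg_right (hM x) (abs_nonneg _)

lemma mulCLM_apply (φ : ℝ → ℝ) (hφm : AEStronglyMeasurable φ volume) (M : ℝ)
    (hM : ∀ x, |φ x| ≤ M) (u : H) :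
    mulCLM φ hφm M hM u = toLp2 (fun x => φ x * u x) := rfl

lemma norm_mulCLM_apply_le (φ : ℝ → ℝ) (hφm : AEStronglyMeasurable φ volume) (M : ℝ)
    (hM : ∀ x, |φ x| ≤ M) (u : H) : ‖mulCLM φ hφm M hM u‖ ≤ M * ‖u‖ := by
  have hM0 : 0 ≤ M := le_trans (abs_nonneg _) (hM 0)
  refine norm_toLp2_le hM0 (memLp_mul hφm hM u) u ?_
  filter_upwards with x
  rw [abs_mul]
  exact mul_le_mul_of_nonneg_right (hM x) (abs_nonneg _)

lemma unif_deriv (σ : ℝ → ℝ) (hσC1 : ContDiff ℝ 1 σ) (R ε : ℝ) (hε : 0 < ε) :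
    ∃ δ, 0 < δ ∧ δ ≤ 1 ∧ ∀ a b : ℝ, |a| ≤ R → |b - a| ≤ δ → |deriv σ b - deriv σ a| ≤ ε := by
  have hcont : Continuous (deriv σ) := hσC1.continuous_deriv le_rfl
  have huc : UniformContinuousOn (deriv σ) (Set.Icc (-(R+1)) (R+1)) :=
    (isCompact_Icc).uniformContinuousOn_of_continuous hcont.continuousOn
  rw [Metric.uniformContinuousOn_iff] at huc
  obtain ⟨δ0, hδ0, hδ⟩ := huc ε hε
  refine ⟨min 1 (δ0/2), lt_min one_pos (by linarith), min_le_left _ _, fun a b ha hb => ?_⟩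
  have hR : (0:ℝ) ≤ R := le_trans (abs_nonneg a) ha
  have h1 : |b - a| ≤ 1 := le_trans hb (min_le_left _ _)
  have hbmem : b ∈ Set.Icc (-(R+1)) (R+1) := by
    have := abs_le.mp ha; have := abs_le.mp h1
    constructor <;> linarith
  have hamem : a ∈ Set.Icc (-(R+1)) (R+1) := by
    have := abs_le.mp ha; constructor <;> linarith
  have hdist : dist b a < δ0 := by
    rw [Real.dist_eq]
    exact lt_of_le_of_lt (le_trans hb (min_le_right _ _)) (by linarith)
  have := hδ b hbmem a hamem hdist
  rw [Real.dist_eq] at this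
  exact this.le

lemma key_mvt (σ : ℝ → ℝ) (hσC1 : ContDiff ℝ 1 σ) (R ε : ℝ) (hε : 0 < ε) :
    ∃ δ, 0 < δ ∧ ∀ a b : ℝ, |a| ≤ R → |b - a| ≤ δ →
      |σ b - σ a - deriv σ a * (b - a)| ≤ ε * |b - a| := by
  obtain ⟨δ, hδpos, _, hδ⟩ := unif_deriv σ hσC1 R ε hε
  refine ⟨δ, hδpos, fun a b ha hb => ?_⟩
  have hdiff : ∀ y : ℝ, HasDerivAt σ (deriv σ y) y := fun y =>
    (hσC1.differentiable one_ne_zero y).hasDerivAt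
  have hconv : Convex ℝ (Set.Icc (a - δ) (a + δ)) := convex_Icc _ _
  have has : a ∈ Set.Icc (a - δ) (a + δ) := by constructor <;> linarith
  have hbs : b ∈ Set.Icc (a - δ) (a + δ) := by
    have := abs_le.mp hb; constructor <;> linarith
  have hf : ∀ y ∈ Set.Icc (a - δ) (a + δ),
      HasDerivWithinAt (fun y => σ y - deriv σ a * y) (deriv σ y - deriv σ a) (Set.Icc (a - δ) (a + δ)) y := by
    intro y _
    have := (hdiff y).sub ((hasDerivAt_id y).const_mul (deriv σ a))
    have h2 := this.hasDerivWithinAt (s := Set.Icc (a - δ) (a + δ))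
    rw [mul_one] at h2
    exact h2
  have hbd : ∀ y ∈ Set.Icc (a - δ) (a + δ), ‖deriv σ y - deriv σ a‖ ≤ ε := by
    intro y hy
    rw [Real.norm_eq_abs]
    exact hδ a y ha (abs_le.mpr ⟨by linarith [hy.1], by linarith [hy.2]⟩)
  have := hconv.norm_image_sub_le_of_norm_hasDerivWithin_le hf hbd has hbs
  rw [Real.norm_eq_abs, Real.norm_eq_abs] at this
  calc |σ b - σ a - deriv σ a * (b - a)|
      = |(σ b - deriv σ a * b) - (σ a - deriv σ a * a)| := by ring_nf
    _ ≤ ε * |b - a| := this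

lemma sigma_abs_le {σ : ℝ → ℝ} {M₂ : ℝ} (hσC1 : ContDiff ℝ 1 σ)
    (hbd : ∀ x : ℝ, |deriv σ x| ≤ M₂) (hσ0 : σ 0 = 0) (y : ℝ) : |σ y| ≤ M₂ * |y| := by
  have hdiff : ∀ z : ℝ, HasDerivAt σ (deriv σ z) z := fun z =>
    (hσC1.differentiable one_ne_zero z).hasDerivAt
  have := convex_univ.norm_image_sub_le_of_norm_hasDerivWithin_le
    (f := σ) (f' := deriv σ) (fun z _ => (hdiff z).hasDerivWithinAt)
    (fun z _ => by rw [Real.norm_eq_abs]; exact hbd z) (Set.mem_univ (0:ℝ)) (Set.mem_univ y)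
  simpa [hσ0, Real.norm_eq_abs] using this

lemma memLp_comp {σ : ℝ → ℝ} {M₂ : ℝ} (hσC1 : ContDiff ℝ 1 σ)
    (hbd : ∀ x : ℝ, |deriv σ x| ≤ M₂) (hσ0 : σ 0 = 0) (u : H) :
    MemLp (fun x => σ (u x)) 2 volume := by
  apply MemLp.of_le_mul (Lp.memLp u)
    (hσC1.continuous.comp_aestronglyMeasurable (Lp.aestronglyMeasurable u))
  filter_upwards with x
  simpa [Real.norm_eq_abs] using sigma_abs_le hσC1 hbd hσ0 (u x)


lemma ae_le_norm_top (u : Lp ℝ ⊤ (volume : Measure ℝ)) :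
    ∀ᵐ x ∂(volume : Measure ℝ), |u x| ≤ ‖u‖ := by
  have h := ae_le_eLpNormEssSup (f := (⇑u : ℝ → ℝ)) (μ := (volume : Measure ℝ))
  have hfin : eLpNormEssSup (⇑u) volume < ⊤ := by
    have := Lp.eLpNorm_lt_top u; rwa [eLpNorm_exponent_top] at this
  filter_upwards [h] with x hx
  rw [Lp.norm_def, eLpNorm_exponent_top]
  calc |u x| = ((‖u x‖₊ : ℝ≥0∞)).toReal := by simp [Real.norm_eq_abs]
    _ ≤ (eLpNormEssSup (⇑u) volume).toReal := ENNReal.toReal_mono hfin.ne hx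

lemma continuous_clm_of_eps {E F : Type*} [NormedAddCommGroup E] [NormedSpace ℝ E]
    [NormedAddCommGroup F] [NormedSpace ℝ F] (T : E → (E →L[ℝ] F))
    (h : ∀ g : E, ∀ ε : ℝ, 0 < ε → ∃ δ : ℝ, 0 < δ ∧
      ∀ g' : E, ‖g' - g‖ < δ → ‖T g' - T g‖ < ε) :
    Continuous T := by
  rw [Metric.continuous_iff]
  intro g ε hε
  obtain ⟨δ, hδ, hd⟩ := h g ε hε
  refine ⟨δ, hδ, fun g' hg' => ?_⟩
  rw [dist_eq_norm] at hg' ⊢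
  exact hd g' hg'

lemma opnorm_le_of_pi {E F : Type*} {n : ℕ} [NormedAddCommGroup E] [NormedSpace ℝ E]
    [NormedAddCommGroup F] [NormedSpace ℝ F] (T : E →L[ℝ] (Fin n → F)) {a : ℝ} (ha : 0 ≤ a)
    (h : ∀ (f : E) (i : Fin n), ‖T f i‖ ≤ a * ‖f‖) : ‖T‖ ≤ a :=
  T.opNorm_le_bound ha fun f =>
    (pi_norm_le_iff_of_nonneg (mul_nonneg ha (norm_nonneg f))).mpr fun i => h f i

end NemAux

theorem nemytskii_contDiff
    (M₁ M₂ : ℝ) (hM₁ : 0 < M₁) (hM₁₂ : M₁ ≤ M₂)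
    (σ : ℝ → ℝ) (hσC1 : ContDiff ℝ 1 σ)
    (hσderiv : ∀ x : ℝ, M₁ ≤ deriv σ x ∧ deriv σ x ≤ M₂)
    (hσ0 : σ 0 = 0) (hσsign : ∀ x : ℝ, 0 ≤ x * σ x)
    (c : ℕ) (W : Fin c → Submodule ℝ H) [∀ i, FiniteDimensional ℝ (W i)]
    (hWbdd : ∀ i : Fin c, ∀ f ∈ W i, MemLp (⇑f) ⊤ volume) :
    -- the derivative, as a continuous-linear-map-valued map N' on W = Π i, W i
    ∃ N' : (∀ i, W i) → ((∀ i, W i) →L[ℝ] (Fin c → H)),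
      -- g ↦ σ′(g) is continuous (so the Nemytskii operator is C¹ on W)
      Continuous N' ∧
      ∀ g : ∀ i, W i,
        -- σ is Fréchet differentiable at g with derivative N' g
        HasFDerivAt (fun f : ∀ i, W i => fun i : Fin c => toLp2 fun x => σ ((f i : H) x))
          (N' g) g ∧
        -- the derivative is the multiplication operator (σ′(g)[f])_i = (σ′∘g_i)·f_i
        (∀ (f : ∀ i, W i) (i : Fin c),
          N' g f i = toLp2 fun x => deriv σ ((g i : H) x) * (f i : H) x) ∧
        -- the bound ‖σ′(g)[f]‖₂ ≤ M₂ ‖f‖₂ (squared, with the ℓ²-product norm)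
        ∀ f : ∀ i, W i, ∑ i, ‖N' g f i‖ ^ 2 ≤ M₂ ^ 2 * ∑ i, ‖(f i : H)‖ ^ 2 := by
  classical
  have hM₂0 : (0:ℝ) < M₂ := lt_of_lt_of_le hM₁ hM₁₂
  have hbd : ∀ x : ℝ, |deriv σ x| ≤ M₂ := fun x =>
    abs_le.mpr ⟨by linarith [(hσderiv x).1], (hσderiv x).2⟩
  have hφm : ∀ u : H, AEStronglyMeasurable (fun x => deriv σ (u x)) volume := fun u =>
    (hσC1.continuous_deriv le_rfl).comp_aestronglyMeasurable (Lp.aestronglyMeasurable u)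
  have hφb : ∀ (u : H) (x : ℝ), |deriv σ (u x)| ≤ M₂ := fun u x => hbd _
  set N' : (∀ i, W i) → ((∀ i, W i) →L[ℝ] (Fin c → H)) := fun g =>
    ContinuousLinearMap.pi (fun i =>
      (NemAux.mulCLM (fun x => deriv σ ((g i : H) x)) (hφm _) M₂ (hφb _)).comp
        ((W i).subtypeL.comp (ContinuousLinearMap.proj i))) with hN'
  have hN'apply : ∀ (g f : ∀ i, W i) (i : Fin c),
      N' g f i = toLp2 (fun x => deriv σ ((g i : H) x) * ((f i : H)) x) := fun g f i => rfl
  -- uniform L∞ control on the finite-dimensional space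
  obtain ⟨C, hC0, hC⟩ : ∃ C : ℝ, 0 < C ∧ ∀ (f : ∀ i, W i) (i : Fin c),
      ∀ᵐ x ∂(volume : Measure ℝ), |((f i : H)) x| ≤ C * ‖f‖ := by
    have hJlin : ∀ i : Fin c, ∃ J : (W i) →L[ℝ] (Lp ℝ ⊤ (volume : Measure ℝ)),
        ∀ s : W i, (⇑(J s) : ℝ → ℝ) =ᵐ[volume] ⇑(s : H) := by
      intro i
      let Jl : (W i) →ₗ[ℝ] (Lp ℝ ⊤ (volume : Measure ℝ)) :=
        { toFun := fun s => (hWbdd i (s : H) s.2).toLp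
          map_add' := by
            intro s t
            rw [← MemLp.toLp_add (hWbdd i (s : H) s.2) (hWbdd i (t : H) t.2)]
            refine MemLp.toLp_congr _ _ ?_
            filter_upwards [Lp.coeFn_add (s : H) (t : H)] with x hx
            show (⇑((s : H) + (t : H)) : ℝ → ℝ) x = _
            rw [hx]
          map_smul' := by
            intro a s
            rw [RingHom.id_apply, ← MemLp.toLp_const_smul a (hWbdd i (s : H) s.2)]
            refine MemLp.toLp_congr _ _ ?_
            filter_upwards [Lp.coeFn_smul a (s : H)] with x hx
            show (⇑(a • (s : H)) : ℝ → ℝ) x = _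
            rw [hx] }
      refine ⟨LinearMap.toContinuousLinearMap Jl, fun s => ?_⟩
      exact MemLp.coeFn_toLp (hWbdd i (s : H) s.2)
    choose J hJ using hJlin
    refine ⟨1 + ∑ i, ‖J i‖, by positivity, fun f i => ?_⟩
    filter_upwards [hJ i (f i), NemAux.ae_le_norm_top (J i (f i))] with x hx1 hx2
    have h1 : |((f i : H)) x| ≤ ‖J i (f i)‖ := by rw [← hx1]; exact hx2
    have h2 : ‖J i (f i)‖ ≤ ‖J i‖ * ‖f i‖ := (J i).le_opNorm (f i)
    have h3 : ‖f i‖ ≤ ‖f‖ := norm_le_pi_norm f i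
    have h4 : ‖J i‖ ≤ ∑ j, ‖J j‖ :=
      Finset.single_le_sum (fun j _ => norm_nonneg (J j)) (Finset.mem_univ i)
    have h5 : ‖J i‖ * ‖f i‖ ≤ (1 + ∑ j, ‖J j‖) * ‖f‖ :=
      mul_le_mul (by linarith) h3 (norm_nonneg _) (by positivity)
    linarith
  refine ⟨N', ?_, fun g => ⟨?_, fun f i => hN'apply g f i, fun f => ?_⟩⟩
  · -- continuity of N'
    refine NemAux.continuous_clm_of_eps (E := ∀ i, W i) (F := Fin c → H) N' (fun g ε hε => ?_)
    obtain ⟨δ₁, hδ₁pos, _, hδ₁⟩ := NemAux.unif_deriv σ hσC1 (C * ‖g‖) (ε/2) (by linarith)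
    refine ⟨δ₁ / C, by positivity, fun g' hdist => ?_⟩
    have hop : ‖N' g' - N' g‖ ≤ ε / 2 := by
      refine (N' g' - N' g).opNorm_le_bound (by linarith) fun f =>
        (pi_norm_le_iff_of_nonneg (mul_nonneg (by linarith) (norm_nonneg f))).mpr fun i => ?_
      have hmem1 : MemLp (fun x => deriv σ ((g' i : H) x) * (f i : H) x) 2 volume :=
        NemAux.memLp_mul (hφm _) (hφb _) _
      have hmem2 : MemLp (fun x => deriv σ ((g i : H) x) * (f i : H) x) 2 volume :=
        NemAux.memLp_mul (hφm _) (hφb _) _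
      have e : (N' g' - N' g) f i
          = toLp2 (fun x => deriv σ ((g' i : H) x) * (f i : H) x
              - deriv σ ((g i : H) x) * (f i : H) x) := by
        simp only [ContinuousLinearMap.sub_apply, Pi.sub_apply, hN'apply]
        exact (NemAux.toLp2_sub hmem1 hmem2).symm
      rw [e]
      have hptwise : ∀ᵐ x ∂(volume : Measure ℝ),
          |deriv σ ((g' i : H) x) * (f i : H) x - deriv σ ((g i : H) x) * (f i : H) x|
            ≤ (ε/2) * |(f i : H) x| := by
        filter_upwards [hC g i, hC (g' - g) i,
          Lp.coeFn_sub ((g' i : H)) ((g i : H))] with x h1 h2 h3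
        have key : ((((g' - g) i : W i) : H) : ℝ → ℝ) x = (g' i : H) x - (g i : H) x := h3
        have hxa : |(g i : H) x| ≤ C * ‖g‖ := h1
        have hxb : |(g' i : H) x - (g i : H) x| ≤ δ₁ := by
          rw [← key]
          calc |((((g' - g) i : W i) : H) : ℝ → ℝ) x| ≤ C * ‖g' - g‖ := h2
            _ ≤ C * (δ₁ / C) := mul_le_mul_of_nonneg_left hdist.le hC0.le
            _ = δ₁ := by field_simp
        have h4 : |deriv σ ((g' i : H) x) - deriv σ ((g i : H) x)| ≤ ε/2 := hδ₁ _ _ hxa hxb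
        calc |deriv σ ((g' i : H) x) * (f i : H) x - deriv σ ((g i : H) x) * (f i : H) x|
            = |deriv σ ((g' i : H) x) - deriv σ ((g i : H) x)| * |(f i : H) x| := by
              rw [← abs_mul]; ring_nf
          _ ≤ (ε/2) * |(f i : H) x| := mul_le_mul_of_nonneg_right h4 (abs_nonneg _)
      calc ‖toLp2 (fun x => deriv σ ((g' i : H) x) * (f i : H) x
              - deriv σ ((g i : H) x) * (f i : H) x)‖
          ≤ (ε/2) * ‖(f i : H)‖ :=
            NemAux.norm_toLp2_le (by linarith) (hmem1.sub hmem2) ((f i : H)) hptwise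
        _ ≤ (ε/2) * ‖f‖ := by
            have : ‖(f i : H)‖ ≤ ‖f‖ := norm_le_pi_norm f i
            exact mul_le_mul_of_nonneg_left this (by linarith)
    calc ‖N' g' - N' g‖ ≤ ε / 2 := hop
      _ < ε := by linarith
  · -- differentiability at g
    refine (hasFDerivAt_iff_isLittleO_nhds_zero (𝕜 := ℝ) (E := ∀ i, W i) (F := Fin c → H)).mpr ?_
    rw [Asymptotics.isLittleO_iff]
    intro ε hε
    obtain ⟨δ₁, hδ₁pos, hδ₁⟩ := NemAux.key_mvt σ hσC1 (C * ‖g‖) ε hε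
    rw [Metric.eventually_nhds_iff]
    refine ⟨δ₁ / C, by positivity, fun h hdist => ?_⟩
    rw [dist_zero_right] at hdist
    refine (pi_norm_le_iff_of_nonneg (by positivity)).mpr fun i => ?_
    simp only [Pi.sub_apply]
    have hA' : MemLp (fun x => σ ((g i : H) x + (h i : H) x)) 2 volume := by
      refine (memLp_congr_ae ?_).mp (NemAux.memLp_comp hσC1 hbd hσ0 ((g i : H) + (h i : H)))
      filter_upwards [Lp.coeFn_add ((g i : H)) ((h i : H))] with x hx
      show σ (((((g i : H) + (h i : H) : H)) : ℝ → ℝ) x) = _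
      rw [hx]; rfl
    have hB : MemLp (fun x => σ ((g i : H) x)) 2 volume :=
      NemAux.memLp_comp hσC1 hbd hσ0 ((g i : H))
    have hCf : MemLp (fun x => deriv σ ((g i : H) x) * (h i : H) x) 2 volume :=
      NemAux.memLp_mul (hφm _) (hφb _) _
    have e1 : toLp2 (fun x => σ ((((g + h) i : W i) : H) x))
        = toLp2 (fun x => σ ((g i : H) x + (h i : H) x)) := by
      apply NemAux.toLp2_congr (NemAux.memLp_comp hσC1 hbd hσ0 (((g + h) i : W i) : H))
      filter_upwards [Lp.coeFn_add ((g i : H)) ((h i : H))] with x hx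
      show σ (((((g i : H) + (h i : H) : H)) : ℝ → ℝ) x) = _
      rw [hx]; rfl
    have e2 : toLp2 (fun x => σ ((g i : H) x + (h i : H) x) - σ ((g i : H) x))
        = toLp2 (fun x => σ ((g i : H) x + (h i : H) x)) - toLp2 (fun x => σ ((g i : H) x)) :=
      NemAux.toLp2_sub hA' hB
    have e3 : toLp2 (fun x => σ ((g i : H) x + (h i : H) x) - σ ((g i : H) x)
            - deriv σ ((g i : H) x) * (h i : H) x)
        = toLp2 (fun x => σ ((g i : H) x + (h i : H) x) - σ ((g i : H) x))
          - toLp2 (fun x => deriv σ ((g i : H) x) * (h i : H) x) :=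
      NemAux.toLp2_sub (hA'.sub hB) hCf
    have hbound : ‖toLp2 (fun x => σ ((g i : H) x + (h i : H) x) - σ ((g i : H) x)
          - deriv σ ((g i : H) x) * (h i : H) x)‖ ≤ ε * ‖(h i : H)‖ := by
      refine NemAux.norm_toLp2_le hε.le ((hA'.sub hB).sub hCf) ((h i : H)) ?_
      filter_upwards [hC g i, hC h i] with x h1 h2
      have h3 : |(g i : H) x + (h i : H) x - (g i : H) x| ≤ δ₁ := by
        rw [show (g i : H) x + (h i : H) x - (g i : H) x = (h i : H) x from by ring]
        calc |(h i : H) x| ≤ C * ‖h‖ := h2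
          _ ≤ C * (δ₁ / C) := mul_le_mul_of_nonneg_left hdist.le hC0.le
          _ = δ₁ := by field_simp
      have h4 := hδ₁ ((g i : H) x) ((g i : H) x + (h i : H) x) h1 h3
      rw [show (g i : H) x + (h i : H) x - (g i : H) x = (h i : H) x from by ring] at h4
      exact h4
    calc ‖toLp2 (fun x => σ ((((g + h) i : W i) : H) x))
            - toLp2 (fun x => σ ((g i : H) x)) - N' g h i‖
        = ‖toLp2 (fun x => σ ((g i : H) x + (h i : H) x) - σ ((g i : H) x)
            - deriv σ ((g i : H) x) * (h i : H) x)‖ := by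
          rw [hN'apply, e1, e3, e2]
      _ ≤ ε * ‖(h i : H)‖ := hbound
      _ ≤ ε * ‖h‖ := by
          have : ‖(h i : H)‖ ≤ ‖h‖ := norm_le_pi_norm h i
          exact mul_le_mul_of_nonneg_left this hε.le
  · -- the quantitative bound
    have hcomp : ∀ i : Fin c, ‖N' g f i‖ ^ 2 ≤ M₂ ^ 2 * ‖(f i : H)‖ ^ 2 := by
      intro i
      have h1 : ‖N' g f i‖ ≤ M₂ * ‖(f i : H)‖ := by
        rw [hN'apply]
        exact NemAux.norm_mulCLM_apply_le _ (hφm _) M₂ (hφb _) ((f i : H))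
      calc ‖N' g f i‖ ^ 2 ≤ (M₂ * ‖(f i : H)‖) ^ 2 :=
            pow_le_pow_left₀ (norm_nonneg _) h1 2
        _ = M₂ ^ 2 * ‖(f i : H)‖ ^ 2 := by ring
    calc ∑ i, ‖N' g f i‖ ^ 2 ≤ ∑ i, M₂ ^ 2 * ‖(f i : H)‖ ^ 2 :=
          Finset.sum_le_sum (fun i _ => hcomp i)
      _ = M₂ ^ 2 * ∑ i, ‖(f i : H)‖ ^ 2 := by rw [Finset.mul_sum]
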